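/- Let x_k ∈ ℝⁿ, Δ > 0, and interpolation points y₁,…,y_n with W the matrix whose t-th row is (y_t − x_k)ᵀ/Δ, assumed invertible. Let J_k ∈ ℝᵐˣⁿ satisfy J_k(y_t − x_k) = r(y_t) − r(x_k) for all t, and suppose ‖r(y_t) − r(x_k) − J(x_k)(y_t − x_k)‖ ≤ (L_J/2)Δ² for each t. Then ‖J_k − J(x_k)‖ ≤ (L_J/2)√n ‖W⁻¹‖ Δ. -/

import Mathlib

open scoped Matrix

open scoped Matrix.Norms.L2Operator

/-- The Euclidean norm of a vector in `Fin k → ℝ`. -/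
noncomputable def euclNorm {k : ℕ} (v : Fin k → ℝ) : ℝ :=
  ‖(WithLp.equiv 2 (Fin k → ℝ)).symm v‖

/-- error bound for the interpolated Jacobian:
`‖J_k − J(x_k)‖ ≤ (L_J/2) √n ‖W⁻¹‖ Δ`, where `W` has rows `(y_t − x_k)ᵀ/Δ`.
Matrix norms are L2 operator (spectral) norms. -/
theorem dfogn_interp_jacobian_error {n m : ℕ}
    (r : (Fin n → ℝ) → (Fin m → ℝ))
    (xk : Fin n → ℝ) (Δ LJ : ℝ) (hΔ : 0 < Δ)
    (y : Fin n → (Fin n → ℝ))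
    (W : Matrix (Fin n) (Fin n) ℝ)
    (hWdef : ∀ t j, W t j = (y t j - xk j) / Δ)
    (hW : IsUnit W.det)
    (Jk Jx : Matrix (Fin m) (Fin n) ℝ)
    (hinterp : ∀ t, Jk *ᵥ (y t - xk) = r (y t) - r xk)
    (htaylor : ∀ t, euclNorm (r (y t) - r xk - Jx *ᵥ (y t - xk)) ≤ LJ / 2 * Δ ^ 2) :
    ‖Jk - Jx‖ ≤ LJ / 2 * Real.sqrt n * ‖W⁻¹‖ * Δ := by
  set E := Jk - Jx with hEdef
  set c := LJ / 2 * Δ with hc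
  -- each column bound
  have hrowW : ∀ t, W t = Δ⁻¹ • (y t - xk) := by
    intro t; funext j
    simp [hWdef t j, div_eq_inv_mul, Pi.sub_apply]
  have hEy : ∀ t, E *ᵥ (y t - xk) = r (y t) - r xk - Jx *ᵥ (y t - xk) := by
    intro t
    rw [hEdef, Matrix.sub_mulVec, hinterp t]
  have hcol : ∀ t : Fin n, ‖(WithLp.equiv 2 (Fin m → ℝ)).symm (E *ᵥ W t)‖ ≤ c := by
    intro t
    have h1 : E *ᵥ W t = Δ⁻¹ • (r (y t) - r xk - Jx *ᵥ (y t - xk)) := by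
      rw [hrowW t, Matrix.mulVec_smul, hEy t]
    rw [h1]
    have := htaylor t
    rw [euclNorm] at this
    have h2 : ‖(WithLp.equiv 2 (Fin m → ℝ)).symm (Δ⁻¹ • (r (y t) - r xk - Jx *ᵥ (y t - xk)))‖
        = Δ⁻¹ * ‖(WithLp.equiv 2 (Fin m → ℝ)).symm (r (y t) - r xk - Jx *ᵥ (y t - xk))‖ := by
      rw [show (WithLp.equiv 2 (Fin m → ℝ)).symm (Δ⁻¹ • (r (y t) - r xk - Jx *ᵥ (y t - xk)))
          = Δ⁻¹ • (WithLp.equiv 2 (Fin m → ℝ)).symm (r (y t) - r xk - Jx *ᵥ (y t - xk)) from rfl,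
        norm_smul, Real.norm_eq_abs, abs_of_pos (inv_pos.2 hΔ)]
    rw [h2, hc]
    calc Δ⁻¹ * ‖(WithLp.equiv 2 (Fin m → ℝ)).symm (r (y t) - r xk - Jx *ᵥ (y t - xk))‖
        ≤ Δ⁻¹ * (LJ / 2 * Δ ^ 2) := by
          exact mul_le_mul_of_nonneg_left this (le_of_lt (inv_pos.2 hΔ))
      _ = LJ / 2 * Δ := by field_simp
  -- c ≥ 0 when n > 0
  rcases Nat.eq_zero_or_pos n with hn | hn
  · subst hn
    have hE0 : E = 0 := by ext i j; exact j.elim0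
    rw [hE0, norm_zero]
    simp [Real.sqrt_eq_zero']
  have hc0 : 0 ≤ c := by
    obtain ⟨t0⟩ := Fin.pos_iff_nonempty.mp hn
    have := le_trans (norm_nonneg _) (hcol t0)
    exact this
  -- bound on ‖E * Wᵀ‖
  have hEW : ‖E * Wᵀ‖ ≤ Real.sqrt n * c := by
    rw [Matrix.l2_opNorm_def]
    apply ContinuousLinearMap.opNorm_le_bound _ (by positivity)
    intro x
    set v : Fin n → ℝ := WithLp.equiv 2 (Fin n → ℝ) x with hv
    have happ : (Matrix.toEuclideanLin.trans LinearMap.toContinuousLinearMap) (E * Wᵀ) x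
        = (WithLp.equiv 2 (Fin m → ℝ)).symm ((E * Wᵀ) *ᵥ v) := by
      rfl
    rw [happ]
    have hsum : (E * Wᵀ) *ᵥ v = ∑ t, v t • (E *ᵥ W t) := by
      funext i
      simp only [Matrix.mulVec, Matrix.mul_apply, Matrix.transpose_apply, dotProduct,
        Finset.sum_apply, Pi.smul_apply, smul_eq_mul]
      exact Finset.sum_congr rfl fun t _ => mul_comm _ _
    rw [hsum]
    have hmap : (WithLp.equiv 2 (Fin m → ℝ)).symm (∑ t, v t • (E *ᵥ W t))
        = ∑ t, v t • (WithLp.equiv 2 (Fin m → ℝ)).symm (E *ᵥ W t) := by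
      simp [WithLp.toLp_sum]
    rw [hmap]
    calc ‖∑ t, v t • (WithLp.equiv 2 (Fin m → ℝ)).symm (E *ᵥ W t)‖
        ≤ ∑ t, ‖v t • (WithLp.equiv 2 (Fin m → ℝ)).symm (E *ᵥ W t)‖ := norm_sum_le _ _
      _ ≤ ∑ t, |v t| * c := by
          apply Finset.sum_le_sum
          intro t _
          rw [norm_smul, Real.norm_eq_abs]
          exact mul_le_mul_of_nonneg_left (hcol t) (abs_nonneg _)
      _ = (∑ t, |v t|) * c := by rw [Finset.sum_mul]
      _ ≤ (Real.sqrt n * ‖x‖) * c := by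
          apply mul_le_mul_of_nonneg_right _ hc0
          have hx : ‖x‖ = Real.sqrt (∑ t, v t ^ 2) := by
            rw [EuclideanSpace.norm_eq]
            congr 1
            refine Finset.sum_congr rfl fun t _ => ?_
            rw [Real.norm_eq_abs, sq_abs]
            rfl
          rw [hx, ← Real.sqrt_mul (Nat.cast_nonneg n)]
          rw [Real.le_sqrt (Finset.sum_nonneg fun t _ => abs_nonneg _) (by positivity)]
          have hcs := sq_sum_le_card_mul_sum_sq (s := Finset.univ) (f := fun t : Fin n => |v t|)
          simpa [sq_abs] using hcs
      _ = Real.sqrt n * c * ‖x‖ := by ring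
  -- recover E from E * Wᵀ
  have hWt : IsUnit (Wᵀ).det := by rwa [Matrix.det_transpose]
  have hfact : E = (E * Wᵀ) * (Wᵀ)⁻¹ := by
    rw [Matrix.mul_assoc, Matrix.mul_nonsing_inv _ hWt, Matrix.mul_one]
  have hWinv : ‖(Wᵀ)⁻¹‖ = ‖W⁻¹‖ := by
    rw [← Matrix.transpose_nonsing_inv, ← Matrix.conjTranspose_eq_transpose_of_trivial,
      Matrix.l2_opNorm_conjTranspose]
  calc ‖E‖ = ‖(E * Wᵀ) * (Wᵀ)⁻¹‖ := by rw [← hfact]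
    _ ≤ ‖E * Wᵀ‖ * ‖(Wᵀ)⁻¹‖ := Matrix.l2_opNorm_mul _ _
    _ ≤ (Real.sqrt n * c) * ‖W⁻¹‖ := by
        rw [hWinv]
        exact mul_le_mul_of_nonneg_right hEW (norm_nonneg _)
    _ = LJ / 2 * Real.sqrt n * ‖W⁻¹‖ * Δ := by rw [hc]; ring
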